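/- For all 1 ≤ i < j ≤ n one has the identity in S_n: g_i⁻¹ · g_j = s_{n−1} ∘ s_{n−2} ∘ ⋯ ∘ s_i ∘ s_j ∘ s_{j+1} ∘ ⋯ ∘ s_{n−1} = s_{j−1} ∘ s_j ∘ ⋯ ∘ s_{n−2} ∘ s_{n−1} ∘ s_{n−2} ∘ ⋯ ∘ s_{i+1} ∘ s_i (indices ascending from j−1 to n−1, then descending from n−2 to i). -/

import Mathlib

/-- The simple transposition `s_j ∈ S_n` (1-based: it swaps the points `j` and `j+1`
of `{1, …, n}`, which are represented by the elements `⟨j-1⟩` and `⟨j⟩` of `Fin n`),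
defined to be the identity unless `1 ≤ j ≤ n-1`. -/
def sT (n j : ℕ) : Equiv.Perm (Fin n) :=
  if h : 1 ≤ j ∧ j < n then Equiv.swap ⟨j - 1, by omega⟩ ⟨j, h.2⟩ else 1

/-- The coset representative `g_i = s_i ∘ s_{i+1} ∘ ⋯ ∘ s_{n-1} ∈ S_n` (1-based; the
empty product `g_n` is the identity). -/
def gElt (n i : ℕ) : Equiv.Perm (Fin n) :=
  (((List.range' i (n - i)).map (sT n)).prod)


lemma sT_inv (n j : ℕ) : (sT n j)⁻¹ = sT n j := by
  unfold sT; split_ifs <;> simp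

lemma sT_apply_val (n j : ℕ) (h1 : 1 ≤ j) (h2 : j < n) (x : Fin n) :
    ((sT n j) x).val = if x.val = j - 1 then j else if x.val = j then j - 1 else x.val := by
  rw [sT, dif_pos ⟨h1, h2⟩, Equiv.swap_apply_def]
  split_ifs <;> simp only [Fin.ext_iff, Fin.val_mk] at * <;> omega

lemma prod_reverse_inv (n : ℕ) (l : List ℕ) :
    ((l.map (sT n)).prod)⁻¹ = ((l.reverse.map (sT n)).prod) := by
  induction l with
  | nil => simp
  | cons a l ih => simp [List.prod_cons, mul_inv_rev, ih, sT_inv]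

lemma asc_apply (n : ℕ) (i : ℕ) (h1 : 1 ≤ i) (len : ℕ) :
    ∀ (_ : i + len ≤ n) (x : Fin n),
    ((((List.range' i len).map (sT n)).prod) x).val =
      if x.val + 1 = i + len then i - 1
      else if i - 1 ≤ x.val ∧ x.val + 1 < i + len then x.val + 1
      else x.val := by
  induction len with
  | zero =>
    intro hn x
    simp only [List.range', List.map_nil, List.prod_nil, Equiv.Perm.one_apply]
    split_ifs <;> omega
  | succ len ih =>
    intro hn x
    rw [show List.range' i (len+1) = List.range' i len ++ [i+len] by
        simpa using List.range'_concat (step := 1) (s := i) (n := len)]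
    rw [List.map_append, List.prod_append, List.map_singleton, List.prod_singleton,
      Equiv.Perm.mul_apply, ih (by omega), sT_apply_val n (i+len) (by omega) (by omega)]
    have := x.isLt
    split_ifs <;> omega

lemma desc_apply (n : ℕ) (i : ℕ) (h1 : 1 ≤ i) (len : ℕ) :
    ∀ (_ : i + len ≤ n) (x : Fin n),
    ((((List.range' i len).reverse.map (sT n)).prod) x).val =
      if x.val + 1 = i then i + len - 1
      else if i ≤ x.val ∧ x.val ≤ i + len - 1 then x.val - 1
      else x.val := by
  induction len with
  | zero =>
    intro hn x
    simp only [List.range', List.reverse_nil, List.map_nil, List.prod_nil,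
      Equiv.Perm.one_apply]
    split_ifs <;> omega
  | succ len ih =>
    intro hn x
    rw [show List.range' i (len+1) = List.range' i len ++ [i+len] by
        simpa using List.range'_concat (step := 1) (s := i) (n := len)]
    rw [List.reverse_append, List.reverse_singleton, List.singleton_append, List.map_cons,
      List.prod_cons, Equiv.Perm.mul_apply,
      sT_apply_val n (i+len) (by omega) (by omega), ih (by omega)]
    have := x.isLt
    split_ifs <;> omega

/-- for `1 ≤ i < j ≤ n` one has
`g_i⁻¹ · g_j = s_{n-1} ∘ ⋯ ∘ s_i ∘ s_j ∘ ⋯ ∘ s_{n-1}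
            = s_{j-1} ∘ s_j ∘ ⋯ ∘ s_{n-2} ∘ s_{n-1} ∘ s_{n-2} ∘ ⋯ ∘ s_{i+1} ∘ s_i`
(indices ascending from `j-1` to `n-1`, then descending from `n-2` to `i`). -/
theorem stmt2 (n i j : ℕ) (hi1 : 1 ≤ i) (hij : i < j) (hjn : j ≤ n) :
    (gElt n i)⁻¹ * gElt n j =
        ((List.range' i (n - i)).reverse.map (sT n)).prod *
          ((List.range' j (n - j)).map (sT n)).prod ∧
    (gElt n i)⁻¹ * gElt n j =
        ((List.range' (j - 1) (n - j + 1)).map (sT n)).prod *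
          ((List.range' i (n - 1 - i)).reverse.map (sT n)).prod := by
  have h1 : (gElt n i)⁻¹ * gElt n j =
      ((List.range' i (n - i)).reverse.map (sT n)).prod *
        ((List.range' j (n - j)).map (sT n)).prod := by
    rw [gElt, gElt, prod_reverse_inv]
  refine ⟨h1, ?_⟩
  rw [h1]
  ext x
  have hx := x.isLt
  rw [Equiv.Perm.mul_apply, Equiv.Perm.mul_apply,
    desc_apply n i hi1 (n - i) (by omega),
    asc_apply n j (by omega) (n - j) (by omega),
    asc_apply n (j-1) (by omega) (n - j + 1) (by omega),
    desc_apply n i hi1 (n - 1 - i) (by omega)]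
  split_ifs <;> omega
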